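/- The hyperbolic distance between projected points has the stated gradient: fix κ < 0 and y ∈ ℝ^d, and let x ∈ ℝ^d with φ(x) ≠ φ(y). Write u(x) = ⟨φ(x), φ(y)⟩_L (so u(x) < -1). Then the map x ↦ (1/√(-κ)) arcosh(-u(x)) is differentiable at x with gradient equal to (1 / √( -κ (u(x)² - 1) )) · ( (√(1 + ‖y‖²) / √(1 + ‖x‖²)) x - y ). -/

import Mathlib

/-- Lorentz inner product on ℝ^(n+1): ⟨x,y⟩_L = -x₀y₀ + ∑_{i=1}^n xᵢyᵢ. -/
noncomputable def lorentz {n : ℕ} (x y : Fin (n + 1) → ℝ) : ℝ :=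
  -(x 0 * y 0) + ∑ i : Fin n, x i.succ * y i.succ

/-- The upper sheet of the hyperboloid in ℝ^(d+1). -/
def hyperboloid (d : ℕ) : Set (Fin (d + 1) → ℝ) :=
  {x | lorentz x x = -1 ∧ 0 < x 0}

/-- Inverse hyperbolic cosine. -/
noncomputable def arcosh (t : ℝ) : ℝ := Real.log (t + Real.sqrt (t ^ 2 - 1))

/-- Hyperbolic distance with curvature -1. -/
noncomputable def hypDist {d : ℕ} (x y : Fin (d + 1) → ℝ) : ℝ :=
  arcosh (-(lorentz x y))

/-- A distance function ρ on a set S is δ-hyperbolic. -/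
def IsDeltaHyperbolic {X : Type*} (ρ : X → X → ℝ) (S : Set X) (δ : ℝ) : Prop :=
  ∀ w ∈ S, ∀ x ∈ S, ∀ y ∈ S, ∀ z ∈ S,
    ρ x w + ρ y z ≤ max (ρ x y + ρ z w) (ρ x z + ρ y w) + 2 * δ

/-- The projection φ from ℝ^d (with Euclidean norm) into ℝ^(d+1),
φ(x) = (√(1 + ‖x‖²), x₁, …, x_d). -/
noncomputable def phiE {d : ℕ} (x : EuclideanSpace ℝ (Fin d)) : Fin (d + 1) → ℝ :=
  Fin.cons (Real.sqrt (1 + ‖x‖ ^ 2)) (fun i => x i)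

lemma hasDerivAt_arcosh {t : ℝ} (ht : 1 < t) :
    HasDerivAt arcosh (1 / Real.sqrt (t ^ 2 - 1)) t := by
  have hs : 0 < t ^ 2 - 1 := by nlinarith
  set s := Real.sqrt (t ^ 2 - 1) with hsdef
  have hs0 : 0 < s := Real.sqrt_pos.mpr hs
  have h1 : HasDerivAt (fun r : ℝ => r ^ 2 - 1) (2 * t) t := by
    simpa using (hasDerivAt_pow 2 t).sub_const 1
  have h2 : HasDerivAt (fun r : ℝ => Real.sqrt (r ^ 2 - 1)) (2 * t / (2 * s)) t :=
    h1.sqrt (ne_of_gt hs)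
  have h3 : HasDerivAt (fun r : ℝ => r + Real.sqrt (r ^ 2 - 1)) (1 + 2 * t / (2 * s)) t :=
    (hasDerivAt_id t).add h2
  have hpos : 0 < t + s := by linarith
  have h4 := h3.log (ne_of_gt hpos)
  have : (1 + 2 * t / (2 * s)) / (t + s) = 1 / s := by
    field_simp
    ring
  rw [this] at h4
  exact h4

lemma lorentz_phiE {d : ℕ} (y z : EuclideanSpace ℝ (Fin d)) :
    lorentz (phiE z) (phiE y) =
      (inner ℝ y z : ℝ) - Real.sqrt (1 + ‖z‖ ^ 2) * Real.sqrt (1 + ‖y‖ ^ 2) := by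
  simp [lorentz, phiE, PiLp.inner_apply, RCLike.inner_apply, conj_trivial, mul_comm]
  ring

lemma one_lt_F {d : ℕ} (y x : EuclideanSpace ℝ (Fin d)) (hne : x ≠ y) :
    1 < Real.sqrt (1 + ‖x‖ ^ 2) * Real.sqrt (1 + ‖y‖ ^ 2) - (inner ℝ y x : ℝ) := by
  set a := Real.sqrt (1 + ‖x‖ ^ 2) with hadef
  set b := Real.sqrt (1 + ‖y‖ ^ 2) with hbdef
  have ha : 0 < a := Real.sqrt_pos.mpr (by positivity)
  have hb : 0 < b := Real.sqrt_pos.mpr (by positivity)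
  have ha2 : a ^ 2 = 1 + ‖x‖ ^ 2 := Real.sq_sqrt (by positivity)
  have hb2 : b ^ 2 = 1 + ‖y‖ ^ 2 := Real.sq_sqrt (by positivity)
  have hCS : |(inner ℝ y x : ℝ)| ≤ ‖y‖ * ‖x‖ := abs_real_inner_le_norm y x
  have hCS1 : (inner ℝ y x : ℝ) ≤ ‖y‖ * ‖x‖ := (abs_le.mp hCS).2
  have hCS2 : -(‖y‖ * ‖x‖) ≤ (inner ℝ y x : ℝ) := (abs_le.mp hCS).1
  have hxy0 : x - y ≠ 0 := sub_ne_zero.mpr hne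
  have hd : 0 < ‖x - y‖ ^ 2 := pow_pos (norm_pos_iff.mpr hxy0) 2
  have hd2 : ‖x - y‖ ^ 2 = ‖x‖ ^ 2 - 2 * (inner ℝ y x : ℝ) + ‖y‖ ^ 2 := by
    rw [norm_sub_sq_real, real_inner_comm]
  rw [hd2] at hd
  nlinarith [mul_pos ha hb, sq_nonneg (a * b - 1 - (inner ℝ y x : ℝ)), sq_nonneg (‖x‖ - ‖y‖),
    norm_nonneg x, norm_nonneg y]

lemma hasFDerivAt_F {d : ℕ} (y x : EuclideanSpace ℝ (Fin d)) (b : ℝ)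
    (hb : b = Real.sqrt (1 + ‖y‖ ^ 2)) :
    HasFDerivAt (fun z : EuclideanSpace ℝ (Fin d) =>
        Real.sqrt (1 + ‖z‖ ^ 2) * b - (inner ℝ y z : ℝ))
      (InnerProductSpace.toDual ℝ _ ((b / Real.sqrt (1 + ‖x‖ ^ 2)) • x - y)) x := by
  have h1 := (hasFDerivAt_id (𝕜 := ℝ) x).inner ℝ (hasFDerivAt_id x)
  have h2 := h1.const_add 1
  simp only [real_inner_self_eq_norm_sq] at h2
  have hpos : (0:ℝ) < 1 + ‖x‖ ^ 2 := by positivity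
  have h3 := (h2.sqrt (ne_of_gt hpos)).mul_const b
  have h4 := (innerSL ℝ y).hasFDerivAt (x := x)
  have h5 := h3.sub h4
  have ha : 0 < Real.sqrt (1 + ‖x‖ ^ 2) := Real.sqrt_pos.mpr hpos
  convert h5 using 1
  case e'_4 => rfl
  case e'_8 => rfl
  case e'_9 => rfl
  case e'_11 => rfl
  ext v
  simp [InnerProductSpace.toDual_apply_apply, inner_sub_left, inner_smul_left,
    fderivInnerCLM_apply, real_inner_comm v x, smul_eq_mul]
  field_simp
  ring

/-- The hyperbolic distance x ↦ arcosh(-⟨φ(x), φ(y)⟩_L)/√(-κ) is differentiable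
with the stated gradient. -/
theorem stmt16 (d : ℕ) (κ : ℝ) (hκ : κ < 0) (y x : EuclideanSpace ℝ (Fin d))
    (hxy : phiE x ≠ phiE y) :
    HasGradientAt
      (fun z : EuclideanSpace ℝ (Fin d) =>
        (1 / Real.sqrt (-κ)) * arcosh (-(lorentz (phiE z) (phiE y))))
      ((1 / Real.sqrt (-κ * ((lorentz (phiE x) (phiE y)) ^ 2 - 1))) •
        ((Real.sqrt (1 + ‖y‖ ^ 2) / Real.sqrt (1 + ‖x‖ ^ 2)) • x - y)) x := by
  set b := Real.sqrt (1 + ‖y‖ ^ 2) with hb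
  set c := 1 / Real.sqrt (-κ) with hc
  have hne : x ≠ y := fun h => hxy (by rw [h])
  -- the inner function
  set F : EuclideanSpace ℝ (Fin d) → ℝ :=
    fun z => Real.sqrt (1 + ‖z‖ ^ 2) * b - (inner ℝ y z : ℝ) with hF
  have hFx : 1 < F x := one_lt_F y x hne
  have hfun : (fun z : EuclideanSpace ℝ (Fin d) =>
      (1 / Real.sqrt (-κ)) * arcosh (-(lorentz (phiE z) (phiE y)))) =
      (fun z => c * arcosh (F z)) := by
    funext z
    rw [lorentz_phiE, neg_sub, hF]
  have hlx : (lorentz (phiE x) (phiE y)) ^ 2 = (F x) ^ 2 := by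
    rw [lorentz_phiE, hF]
    ring
  rw [hfun, hlx]
  -- derivative of outer function
  have hs : 0 < (F x) ^ 2 - 1 := by nlinarith
  have hderiv : HasDerivAt (fun t => c * arcosh t) (c * (1 / Real.sqrt ((F x) ^ 2 - 1))) (F x) :=
    (hasDerivAt_arcosh hFx).const_mul c
  have hFf := hasFDerivAt_F y x b hb
  have hcomp := hderiv.comp_hasFDerivAt x hFf
  rw [hasGradientAt_iff_hasFDerivAt]
  convert hcomp using 1
  case e'_9 => rfl
  case e'_11 => rfl
  rw [map_smul]
  congr 1
  have hk : (0:ℝ) < -κ := by linarith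
  rw [Real.sqrt_mul hk.le, hc]
  have h1 : Real.sqrt (-κ) ≠ 0 := ne_of_gt (Real.sqrt_pos.mpr hk)
  have h2 : Real.sqrt ((F x) ^ 2 - 1) ≠ 0 := ne_of_gt (Real.sqrt_pos.mpr hs)
  field_simp
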